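/- Let p be a prime and 1 ≤ ℓ < p-1. Let m be a positive integer such that in the rational function field 𝔽_p(t), the element (A_{ℓ,1}(t+1)^m + A_{ℓ,2}(t+2)^m + ... + A_{ℓ,p-1}(t+p-1)^m) = 1 and ∑_a A_{k,a}(t+a)^m = 0 for all ℓ < k ≤ p-2, where (A_{k,a}) is the inverse of the Vandermonde matrix (a^j). Then m is a sum of exactly ℓ powers of p, i.e., m = p^{n_1} + ... + p^{n_ℓ} for some n_1,...,n_ℓ ∈ ℕ₀. -/

import Mathlib

open Polynomial

/-- digit-sum recursion -/
lemma mydigits_sum_def (p : ℕ) (hp : 2 ≤ p) (m : ℕ) :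
    (Nat.digits p m).sum = m % p + (Nat.digits p (m / p)).sum := by
  rcases Nat.eq_zero_or_pos m with h | h
  · simp [h]
  · rw [Nat.digits_def' (by omega : 1 < p) h]; simp

def subdig (p : ℕ) : ℕ → ℕ → ℕ → ℕ
  | 0, _, _ => 0
  | fuel + 1, t, m => min (m % p) t + p * subdig p fuel (t - min (m % p) t) (m / p)

lemma subdig_zero (p : ℕ) : ∀ fuel t, subdig p fuel t 0 = 0
  | 0, _ => rfl
  | fuel + 1, t => by simp [subdig, subdig_zero p fuel]

lemma subdig_spec (p : ℕ) (hp : 2 ≤ p) :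
    ∀ fuel t m, m ≤ fuel →
      subdig p fuel t m ≤ m ∧
      (∀ j, subdig p fuel t m / p ^ j % p ≤ m / p ^ j % p) ∧
      (Nat.digits p (subdig p fuel t m)).sum = min t (Nat.digits p m).sum := by
  intro fuel
  induction fuel with
  | zero =>
    intro t m hm
    have : m = 0 := by omega
    subst this
    simp [subdig]
  | succ fuel ih =>
    intro t m hm
    rcases Nat.eq_zero_or_pos m with h0 | h0
    · subst h0
      simp [subdig_zero]
    · have hrec : m / p ≤ fuel := by
        have := Nat.div_lt_self h0 (by omega : 1 < p)
        omega
      set d := min (m % p) t with hd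
      obtain ⟨ih1, ih2, ih3⟩ := ih (t - d) (m / p) hrec
      set i' := subdig p fuel (t - d) (m / p) with hi'
      have heq : subdig p (fuel + 1) t m = d + p * i' := rfl
      have hdp : d < p := by
        have := Nat.mod_lt m (show 0 < p by omega)
        omega
      have hmodp : (d + p * i') % p = d := by
        rw [Nat.add_mul_mod_self_left, Nat.mod_eq_of_lt hdp]
      have hdivp : (d + p * i') / p = i' := by
        rw [Nat.add_mul_div_left _ _ (show 0 < p by omega), Nat.div_eq_of_lt hdp]
        omega
      refine ⟨?_, ?_, ?_⟩
      · rw [heq]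
        have := Nat.mod_add_div m p
        have : d ≤ m % p := Nat.min_le_left _ _
        nlinarith [Nat.mod_add_div m p, ih1]
      · intro j
        rw [heq]
        cases j with
        | zero =>
          simp only [pow_zero, Nat.div_one, hmodp]
          omega
        | succ j =>
          have e1 : ∀ x : ℕ, x / p ^ (j + 1) = x / p / p ^ j := by
            intro x
            rw [Nat.div_div_eq_div_mul, pow_succ']
          rw [e1, e1, hdivp]
          exact ih2 j
      · rw [heq]
        rw [mydigits_sum_def p hp (d + p * i'), hmodp, hdivp, ih3,
          mydigits_sum_def p hp m]
        omega

lemma choose_cast_ne_zero (p : ℕ) (hp : p.Prime) (m i : ℕ) (him : i ≤ m)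
    (hdom : ∀ j, i / p ^ j % p ≤ m / p ^ j % p) : ((m.choose i : ℕ) : ZMod p) ≠ 0 := by
  haveI := Fact.mk hp
  have ha : m < p ^ (m + 1) :=
    lt_of_le_of_lt (Nat.le_succ m) (Nat.lt_pow_self hp.one_lt : m + 1 < p ^ (m + 1))
  have hi : i < p ^ (m + 1) := lt_of_le_of_lt him ha
  have hmod := Choose.choose_modEq_prod_range_choose_nat (p := p) ha hi
  have hcast : ((m.choose i : ℕ) : ZMod p)
      = ((∏ j ∈ Finset.range (m + 1), (m / p ^ j % p).choose (i / p ^ j % p) : ℕ) : ZMod p) :=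
    (ZMod.natCast_eq_natCast_iff _ _ _).mpr hmod
  rw [hcast, Nat.cast_prod]
  apply Finset.prod_ne_zero_iff.mpr
  intro j _
  intro h0
  have hba : i / p ^ j % p ≤ m / p ^ j % p := hdom j
  have hap : m / p ^ j % p < p := Nat.mod_lt _ hp.pos
  have hdvd : p ∣ (m / p ^ j % p).choose (i / p ^ j % p) :=
    (ZMod.natCast_eq_zero_iff _ _).mp h0
  have hfac : p ∣ (m / p ^ j % p).factorial := by
    rw [← Nat.choose_mul_factorial_mul_factorial hba]
    exact (hdvd.mul_right _).mul_right _
  have := (Nat.Prime.dvd_factorial hp).mp hfac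
  omega

lemma exists_multiset_digits (p : ℕ) (hp : 2 ≤ p) (m : ℕ) :
    ∃ M : Multiset ℕ, Multiset.card M = (Nat.digits p m).sum
      ∧ (M.map (p ^ ·)).sum = m := by
  induction m using Nat.strong_induction_on with
  | _ m ih =>
    rcases Nat.eq_zero_or_pos m with h | h
    · exact ⟨0, by simp [h]⟩
    · obtain ⟨M, hc, hs⟩ := ih (m / p) (Nat.div_lt_self h (by omega))
      refine ⟨Multiset.replicate (m % p) 0 + M.map (· + 1), ?_, ?_⟩
      · rw [Multiset.card_add, Multiset.card_replicate, Multiset.card_map, hc,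
          Nat.digits_def' (by omega : 1 < p) h]
        simp
      · rw [Multiset.map_add, Multiset.sum_add, Multiset.map_map, Multiset.map_replicate]
        have h1 : (Multiset.replicate (m % p) ((p : ℕ) ^ (0 : ℕ))).sum = m % p := by
          simp
        have h2 : (M.map ((p ^ ·) ∘ (· + 1))).sum = p * (M.map (p ^ ·)).sum := by
          rw [← Multiset.sum_map_mul_left]
          apply congrArg
          apply Multiset.map_congr rfl
          intro e _
          simp [pow_succ, mul_comm]
        rw [h1, h2, hs]
        have := Nat.mod_add_div m p
        omega

lemma exists_multiset_card (p : ℕ) (hp : 2 ≤ p) :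
    ∀ (t c m : ℕ), (∃ M : Multiset ℕ, Multiset.card M = c ∧ (M.map (p ^ ·)).sum = m) →
      c + t * (p - 1) ≤ m →
      ∃ M : Multiset ℕ, Multiset.card M = c + t * (p - 1) ∧ (M.map (p ^ ·)).sum = m := by
  intro t
  induction t with
  | zero =>
    intro c m h _
    simpa using h
  | succ t ih =>
    intro c m hM hle
    have hmul : (t + 1) * (p - 1) = t * (p - 1) + (p - 1) := by ring
    obtain ⟨M, hc, hs⟩ := ih c m hM (by omega)
    have hex : ∃ e ∈ M, 1 ≤ e := by
      by_contra hno
      push_neg at hno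
      have hall : ∀ e ∈ M, e = 0 := fun e he => by have := hno e he; omega
      have hmap : Multiset.map (p ^ ·) M = Multiset.map (fun _ => 1) M :=
        Multiset.map_congr rfl (fun e he => by rw [hall e he, pow_zero])
      have : (M.map (p ^ ·)).sum = Multiset.card M := by
        rw [hmap, Multiset.map_const', Multiset.sum_replicate, smul_eq_mul, mul_one]
      omega
    obtain ⟨e, heM, he⟩ := hex
    refine ⟨M.erase e + Multiset.replicate p (e - 1), ?_, ?_⟩
    · rw [Multiset.card_add, Multiset.card_erase_of_mem heM, Multiset.card_replicate]
      have hcard : 0 < Multiset.card M := Multiset.card_pos_iff_exists_mem.mpr ⟨e, heM⟩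
      simp only [Nat.pred_eq_sub_one]
      omega
    · rw [Multiset.map_add, Multiset.sum_add, Multiset.map_replicate, Multiset.sum_replicate,
        smul_eq_mul]
      have hsum : (M.map (p ^ ·)).sum = p ^ e + ((M.erase e).map (p ^ ·)).sum := by
        conv_lhs => rw [← Multiset.cons_erase heM]
        simp
      have hpe : p ^ e = p * p ^ (e - 1) := by
        conv_lhs => rw [show e = e - 1 + 1 by omega]
        rw [pow_succ]
        ring
      omega

open Polynomial in
theorem stmt11 (p : ℕ) (hp : p.Prime) (ℓ : ℕ) (hℓ : 1 ≤ ℓ) (hℓp : ℓ < p - 1)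
    (V : Matrix (Fin (p - 1)) (Fin (p - 1)) (ZMod p))
    (hV : ∀ a j : Fin (p - 1), V a j = (((a : ℕ) + 1 : ℕ) : ZMod p) ^ (j : ℕ))
    (A : Matrix (Fin (p - 1)) (Fin (p - 1)) (ZMod p)) (hA : A = V⁻¹)
    (m : ℕ) (hm : 0 < m)
    (h1 : ∑ a : Fin (p - 1),
        C (A ⟨ℓ, hℓp⟩ a) * (X + C (((a : ℕ) + 1 : ℕ) : ZMod p)) ^ m = 1)
    (h2 : ∀ k : Fin (p - 1), ℓ < (k : ℕ) →
        ∑ a : Fin (p - 1),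
          C (A k a) * (X + C (((a : ℕ) + 1 : ℕ) : ZMod p)) ^ m = 0) :
    ∃ n : Fin ℓ → ℕ, m = ∑ i, p ^ n i := by
  haveI := Fact.mk hp
  have hp3 : 3 ≤ p := by
    have := hp.two_le
    omega
  have hN2 : 2 ≤ p - 1 := by omega
  -- basic facts about the values a+1
  have hvne : ∀ a : Fin (p - 1), (((a : ℕ) + 1 : ℕ) : ZMod p) ≠ 0 := by
    intro a h
    have hdvd : p ∣ (a : ℕ) + 1 := (ZMod.natCast_eq_zero_iff _ _).mp h
    have := a.2
    have := Nat.le_of_dvd (by omega) hdvd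
    omega
  have hvinj : Function.Injective (fun a : Fin (p - 1) => (((a : ℕ) + 1 : ℕ) : ZMod p)) := by
    intro a b hab
    have ha : ((((a : ℕ) + 1 : ℕ) : ZMod p)).val = (a : ℕ) + 1 :=
      ZMod.val_cast_of_lt (by have := a.2; omega)
    have hb : ((((b : ℕ) + 1 : ℕ) : ZMod p)).val = (b : ℕ) + 1 :=
      ZMod.val_cast_of_lt (by have := b.2; omega)
    have := congrArg ZMod.val hab
    simp only at this
    rw [ha, hb] at this
    exact Fin.ext (by omega)
  have hVeq : V = Matrix.vandermonde (fun a : Fin (p - 1) => (((a : ℕ) + 1 : ℕ) : ZMod p)) := by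
    ext a j
    rw [hV]
    rfl
  have hdet : IsUnit V.det := by
    rw [hVeq, isUnit_iff_ne_zero]
    exact Matrix.det_vandermonde_ne_zero_iff.mpr hvinj
  have hAV : A * V = 1 := by
    rw [hA]
    exact Matrix.nonsing_inv_mul V hdet
  -- the key orthogonality relation
  have key : ∀ (k : Fin (p - 1)) (i : ℕ),
      (∑ a, A k a * (((a : ℕ) + 1 : ℕ) : ZMod p) ^ i)
        = if (k : ℕ) = i % (p - 1) then 1 else 0 := by
    intro k i
    have hiN : i % (p - 1) < p - 1 := Nat.mod_lt _ (by omega)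
    have hpow : ∀ a : Fin (p - 1),
        (((a : ℕ) + 1 : ℕ) : ZMod p) ^ i = V a ⟨i % (p - 1), hiN⟩ := by
      intro a
      rw [hV]
      show (((a : ℕ) + 1 : ℕ) : ZMod p) ^ i = _ ^ (i % (p - 1))
      conv_lhs => rw [← Nat.div_add_mod i (p - 1)]
      rw [pow_add, pow_mul, ZMod.pow_card_sub_one_eq_one (hvne a), one_pow, one_mul]
    simp_rw [hpow]
    rw [← Matrix.mul_apply, hAV, Matrix.one_apply]
    simp [Fin.ext_iff]
  -- coefficients of the polynomials in the hypotheses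
  have hcoeff : ∀ (k : Fin (p - 1)) (j : ℕ),
      (∑ a, C (A k a) * (X + C (((a : ℕ) + 1 : ℕ) : ZMod p)) ^ m).coeff j
        = if (k : ℕ) = (m - j) % (p - 1) then (m.choose j : ZMod p) else 0 := by
    intro k j
    rw [Polynomial.finset_sum_coeff]
    simp_rw [Polynomial.coeff_C_mul, Polynomial.coeff_X_add_C_pow, ← mul_assoc]
    rw [← Finset.sum_mul, key k (m - j)]
    split_ifs <;> simp
  have hL : ∀ j : ℕ,
      (if ℓ = (m - j) % (p - 1) then (m.choose j : ZMod p) else 0)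
        = if j = 0 then 1 else 0 := by
    intro j
    have h := congrArg (fun q : (ZMod p)[X] => q.coeff j) h1
    rw [hcoeff ⟨ℓ, hℓp⟩ j] at h
    rw [h, Polynomial.coeff_one]
  have hm1 : m % (p - 1) = ℓ := by
    have h := hL 0
    rw [Nat.sub_zero, if_pos rfl] at h
    by_contra hne
    rw [if_neg (fun hh => hne hh.symm)] at h
    exact one_ne_zero h.symm
  have hF : ∀ i, i < m → ℓ ≤ i % (p - 1) → ((m.choose i : ℕ) : ZMod p) = 0 := by
    intro i him hres
    have hJ : m - (m - i) = i := by omega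
    have hcs : m.choose (m - i) = m.choose i := Nat.choose_symm (le_of_lt him)
    rcases eq_or_lt_of_le hres with heq | hlt
    · have h := hL (m - i)
      rw [hJ, if_pos heq, if_neg (by omega)] at h
      rw [← hcs, h]
    · have hlt' : i % (p - 1) < p - 1 := Nat.mod_lt _ (by omega)
      have h := congrArg (fun q : (ZMod p)[X] => q.coeff (m - i))
        (h2 ⟨i % (p - 1), hlt'⟩ hlt)
      simp only [Polynomial.coeff_zero] at h
      rw [hcoeff ⟨i % (p - 1), hlt'⟩ (m - i)] at h
      rw [hJ, if_pos rfl] at h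
      rw [← hcs, h]
  -- number theory
  have hpN : p % (p - 1) = 1 := by
    obtain ⟨q, hq⟩ : ∃ q, p = q + 1 := ⟨p - 1, by omega⟩
    subst hq
    simp only [Nat.add_sub_cancel]
    rw [Nat.add_mod_left]
    exact Nat.mod_eq_of_lt (by omega)
  have hmods : m % (p - 1) = (Nat.digits p m).sum % (p - 1) :=
    Nat.modEq_digits_sum (p - 1) p hpN m
  have hsl : (Nat.digits p m).sum ≤ ℓ := by
    by_contra hgt
    push_neg at hgt
    obtain ⟨hle, hdom, hsum⟩ := subdig_spec p (by omega) m ℓ m le_rfl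
    set i := subdig p m ℓ m with hi
    have hsi : (Nat.digits p i).sum = ℓ := by
      rw [hsum]
      omega
    have hine : i < m := by
      rcases lt_or_eq_of_le hle with h | h
      · exact h
      · rw [h] at hsi
        omega
    have himod : i % (p - 1) = ℓ := by
      have h3 : i % (p - 1) = (Nat.digits p i).sum % (p - 1) :=
        Nat.modEq_digits_sum (p - 1) p hpN i
      rw [h3, hsi, Nat.mod_eq_of_lt hℓp]
    exact choose_cast_ne_zero p hp m i hle hdom (hF i hine (le_of_eq himod.symm))
  have hℓm : ℓ ≤ m := by
    have := Nat.mod_le m (p - 1)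
    omega
  have hdvd : (p - 1) ∣ ℓ - (Nat.digits p m).sum := by
    have hℓmod : ℓ % (p - 1) = (Nat.digits p m).sum % (p - 1) := by
      rw [Nat.mod_eq_of_lt hℓp, ← hm1]
      exact hmods
    exact (Nat.modEq_iff_dvd' hsl).mp hℓmod.symm
  obtain ⟨t, ht⟩ := hdvd
  have hℓeq : ℓ = (Nat.digits p m).sum + t * (p - 1) := by
    have : t * (p - 1) = (p - 1) * t := by ring
    omega
  obtain ⟨M, hMc, hMs⟩ := exists_multiset_card p (by omega) t (Nat.digits p m).sum m
    (exists_multiset_digits p (by omega) m) (by omega)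
  rw [← hℓeq] at hMc
  -- convert the multiset to a function Fin ℓ → ℕ
  have hLlen : M.toList.length = ℓ := by rw [Multiset.length_toList, hMc]
  refine ⟨fun i => M.toList.get (Fin.cast hLlen.symm i), ?_⟩
  have hsum2 : (M.map (p ^ ·)).sum = ∑ i : Fin ℓ, p ^ M.toList.get (Fin.cast hLlen.symm i) := by
    conv_lhs => rw [← Multiset.coe_toList M]
    rw [Multiset.map_coe, Multiset.sum_coe]
    rw [← List.ofFn_get (M.toList.map (p ^ ·)), List.sum_ofFn]
    rw [← Fin.sum_congr' _ (by rw [List.length_map, hLlen])]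
    apply Finset.sum_congr rfl
    intro i _
    simp
  rw [← hMs, hsum2]
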